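/- Let X be a Banach space, S : X → X a map, A ⊆ X a compact set with S(A) = A. Suppose P : X → X is a linear projection onto a subspace of finite dimension Λ, and there are constants a, b > 0 with ‖P S(φ) − P S(ψ)‖ ≤ a‖φ − ψ‖ and ‖(I − P) S(φ) − (I − P) S(ψ)‖ ≤ b‖φ − ψ‖ for all φ, ψ ∈ A. If there exists α ∈ (0,2) with η := α a + 2b < 1, then the d-dimensional Hausdorff measure of A is zero for every d > (−ln Λ − Λ ln(2 + 4/α)) / ln η; in particular the Hausdorff dimension of A is at most this bound. -/

import Mathlib

open Metric Set MeasureTheory Filter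
open scoped ENNReal NNReal Topology


theorem aux_cover_ball {E : Type*} [NormedAddCommGroup E] [NormedSpace ℝ E]
    [FiniteDimensional ℝ E] (R ε : ℝ) (hε : 0 < ε) (hR : 0 ≤ R) :
    ∃ t : Finset E, ((t.card : ℝ) ≤ ((2 * R + ε) / ε) ^ (Module.finrank ℝ E)) ∧
      closedBall (0 : E) R ⊆ ⋃ y ∈ t, closedBall y ε := by
  classical
  set F : Set (Set E) := {T | T ⊆ closedBall (0 : E) R ∧ T.Pairwise fun x y => ε < dist x y}
  obtain ⟨M, -, hMmax⟩ := zorn_subset_nonempty F (fun c hc hchain _ => by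
      refine ⟨⋃₀ c, ⟨?_, ?_⟩, fun s hs => subset_sUnion_of_mem hs⟩
      · exact sUnion_subset fun s hs => (hc hs).1
      · intro x hx y hy hxy
        obtain ⟨s, hs, hxs⟩ := hx
        obtain ⟨s', hs', hys⟩ := hy
        rcases hchain.total hs hs' with h | h
        · exact (hc hs').2 (h hxs) hys hxy
        · exact (hc hs).2 hxs (h hys) hxy) ∅ ⟨empty_subset _, pairwise_empty _⟩
  have hMball : M ⊆ closedBall (0 : E) R := hMmax.prop.1
  have hMsep : M.Pairwise fun x y => ε < dist x y := hMmax.prop.2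
  -- M is finite
  have hMfin : M.Finite := by
    obtain ⟨s, hsfin, hscov⟩ := Metric.totallyBounded_iff.1
      (isCompact_closedBall (0 : E) R).totallyBounded (ε / 2) (by linarith)
    have hex : ∀ x, x ∈ M → ∃ y, y ∈ s ∧ x ∈ ball y (ε / 2) := fun x hx => by
      simpa using hscov (hMball hx)
    choose! f hfs hfball using hex
    refine Set.Finite.of_finite_image (f := f) (hsfin.subset ?_) ?_
    · rintro y ⟨x, hx, rfl⟩; exact hfs x hx
    · intro x hx y hy hxy
      by_contra hne
      have hsep := hMsep hx hy hne
      have h1 := hfball x hx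
      have h2 := hfball y hy
      rw [hxy] at h1
      have : dist x y < ε := by
        have := dist_triangle x (f y) y
        rw [mem_ball] at h1 h2
        rw [dist_comm] at h2
        linarith
      linarith
  -- the cover property by maximality
  have hcov : ∀ x ∈ closedBall (0 : E) R, ∃ y ∈ M, dist x y ≤ ε := by
    intro x hx
    by_cases hxM : x ∈ M
    · exact ⟨x, hxM, by simp [hε.le]⟩
    by_contra hcon
    push_neg at hcon
    have hins : insert x M ∈ F := by
      constructor
      · exact insert_subset hx hMball
      · rw [pairwise_insert]
        exact ⟨hMsep, fun y hy _ => ⟨hcon y hy, by rw [dist_comm]; exact hcon y hy⟩⟩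
    have := hMmax.eq_of_subset hins (subset_insert x M)
    exact hxM (this ▸ mem_insert x M)
  -- measure / packing bound on the cardinality
  refine ⟨hMfin.toFinset, ?_, ?_⟩
  · borelize E
    set n := Module.finrank ℝ E
    set μ : Measure E := (Module.finBasis ℝ E).addHaar
    have hdisj : (hMfin.toFinset : Set E).PairwiseDisjoint
        (fun x => closedBall x (ε / 2)) := by
      intro x hx y hy hne
      refine closedBall_disjoint_closedBall ?_
      have := hMsep (hMfin.mem_toFinset.1 hx) (hMfin.mem_toFinset.1 hy) hne
      linarith
    have hsub : (⋃ x ∈ hMfin.toFinset, closedBall x (ε / 2)) ⊆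
        closedBall (0 : E) (R + ε / 2) := by
      refine iUnion₂_subset fun x hx => ?_
      intro z hz
      have hxball := hMball (hMfin.mem_toFinset.1 hx)
      rw [mem_closedBall] at *
      calc dist z 0 ≤ dist z x + dist x 0 := dist_triangle _ _ _
        _ ≤ ε / 2 + R := add_le_add hz hxball
        _ = R + ε / 2 := by ring
    have hmeq : μ (⋃ x ∈ hMfin.toFinset, closedBall x (ε / 2)) =
        ∑ x ∈ hMfin.toFinset, μ (closedBall x (ε / 2)) :=
      measure_biUnion_finset hdisj fun x _ => measurableSet_closedBall
    have hballm : ∀ x : E, μ (closedBall x (ε / 2)) =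
        ENNReal.ofReal ((ε / 2) ^ n) * μ (ball 0 1) := fun x =>
      Measure.addHaar_closedBall μ x (by linarith)
    have hbig : μ (closedBall (0 : E) (R + ε / 2)) =
        ENNReal.ofReal ((R + ε / 2) ^ n) * μ (ball 0 1) :=
      Measure.addHaar_closedBall μ _ (by linarith)
    have hineq : (hMfin.toFinset.card : ℝ≥0∞) * ENNReal.ofReal ((ε / 2) ^ n) * μ (ball 0 1)
        ≤ ENNReal.ofReal ((R + ε / 2) ^ n) * μ (ball 0 1) := by
      calc (hMfin.toFinset.card : ℝ≥0∞) * ENNReal.ofReal ((ε / 2) ^ n) * μ (ball 0 1)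
          = ∑ x ∈ hMfin.toFinset, μ (closedBall x (ε / 2)) := by
            rw [Finset.sum_congr rfl fun x _ => hballm x, Finset.sum_const, nsmul_eq_mul,
              mul_assoc]
        _ = μ (⋃ x ∈ hMfin.toFinset, closedBall x (ε / 2)) := hmeq.symm
        _ ≤ μ (closedBall (0 : E) (R + ε / 2)) := measure_mono hsub
        _ = ENNReal.ofReal ((R + ε / 2) ^ n) * μ (ball 0 1) := hbig
    have hb0 : μ (ball (0 : E) 1) ≠ 0 := (measure_ball_pos μ 0 one_pos).ne'
    have hbt : μ (ball (0 : E) 1) ≠ ⊤ := measure_ball_lt_top.ne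
    have hineq2 : (hMfin.toFinset.card : ℝ≥0∞) * ENNReal.ofReal ((ε / 2) ^ n)
        ≤ ENNReal.ofReal ((R + ε / 2) ^ n) :=
      (ENNReal.mul_le_mul_iff_left hb0 hbt).1 hineq
    have h2 : (hMfin.toFinset.card : ℝ) * (ε / 2) ^ n ≤ (R + ε / 2) ^ n := by
      rw [← ENNReal.ofReal_le_ofReal_iff (by positivity), ENNReal.ofReal_mul (by positivity)]
      rwa [ENNReal.ofReal_natCast]
    have hpow : (0 : ℝ) < (ε / 2) ^ n := by positivity
    have heq : ((2 * R + ε) / ε : ℝ) = (R + ε / 2) / (ε / 2) := by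
      field_simp
    rw [heq, div_pow, le_div_iff₀ hpow]
    exact h2
  · intro x hx
    obtain ⟨y, hy, hdist⟩ := hcov x hx
    exact mem_iUnion₂.2 ⟨y, hMfin.mem_toFinset.2 hy, mem_closedBall.2 hdist⟩

theorem step_lemma
    {X : Type*} [NormedAddCommGroup X] [NormedSpace ℝ X]
    (S : X → X) (A : Set X)
    (P : X →ₗ[ℝ] X)
    (Λ : ℕ) (hΛ : 1 ≤ Λ) (hrank : Module.finrank ℝ (LinearMap.range P) = Λ)
    (a b : ℝ) (ha : 0 < a) (hb : 0 < b)
    (hP : ∀ φ ∈ A, ∀ ψ ∈ A, ‖P (S φ) - P (S ψ)‖ ≤ a * ‖φ - ψ‖)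
    (hQ : ∀ φ ∈ A, ∀ ψ ∈ A, ‖(S φ - P (S φ)) - (S ψ - P (S ψ))‖ ≤ b * ‖φ - ψ‖)
    (α : ℝ) (hα0 : 0 < α) (hα2 : α < 2)
    (c : X) (hc : c ∈ A) (ρ : ℝ) (hρ : 0 < ρ) :
    ∃ t : Finset X, ((t.card : ℝ) ≤ (2 + 4 / α) ^ Λ) ∧
      S '' (closedBall c ρ ∩ A) ⊆ ⋃ y ∈ t, closedBall y ((α * a + 2 * b) / 2 * ρ) := by
  classical
  set E := LinearMap.range P
  haveI : FiniteDimensional ℝ E := FiniteDimensional.of_finrank_pos (by omega)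
  set ε : ℝ := α / 2 * (a * ρ) with hεdef
  have hε : 0 < ε := by positivity
  obtain ⟨t₀, ht₀card, ht₀cov⟩ := aux_cover_ball (E := E) (a * ρ) ε hε (by positivity)
  refine ⟨t₀.image (fun e : E => (e : X) + S c), ?_, ?_⟩
  · calc ((t₀.image (fun e : E => (e : X) + S c)).card : ℝ) ≤ (t₀.card : ℝ) := by
          exact_mod_cast Finset.card_image_le
    _ ≤ ((2 * (a * ρ) + ε) / ε) ^ (Module.finrank ℝ E) := ht₀card
    _ = (4 / α + 1) ^ Λ := by
        rw [hrank]
        congr 1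
        rw [hεdef]
        field_simp
        ring
    _ ≤ (2 + 4 / α) ^ Λ := by
        apply pow_le_pow_left₀ (by positivity)
        linarith
  · rintro x ⟨φ, ⟨hφball, hφA⟩, rfl⟩
    have hφc : ‖φ - c‖ ≤ ρ := by rwa [mem_closedBall, dist_eq_norm] at hφball
    set v : E := ⟨P (S φ) - P (S c), by
      rw [show P (S φ) - P (S c) = P (S φ - S c) by simp [map_sub]]
      exact LinearMap.mem_range_self P _⟩ with hvdef
    have hvball : v ∈ closedBall (0 : E) (a * ρ) := by
      rw [mem_closedBall, dist_zero_right]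
      calc ‖v‖ = ‖P (S φ) - P (S c)‖ := rfl
        _ ≤ a * ‖φ - c‖ := hP φ hφA c hc
        _ ≤ a * ρ := by nlinarith
    obtain ⟨y₀, hy₀t, hy₀⟩ := mem_iUnion₂.1 (ht₀cov hvball)
    refine mem_iUnion₂.2 ⟨(y₀ : X) + S c, Finset.mem_image_of_mem _ hy₀t, ?_⟩
    rw [mem_closedBall, dist_eq_norm]
    have hvy : ‖(v : X) - (y₀ : X)‖ ≤ ε := by
      rw [mem_closedBall, dist_eq_norm] at hy₀
      exact_mod_cast hy₀
    have hq : ‖(S φ - P (S φ)) - (S c - P (S c))‖ ≤ b * ρ := by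
      calc ‖(S φ - P (S φ)) - (S c - P (S c))‖ ≤ b * ‖φ - c‖ := hQ φ hφA c hc
        _ ≤ b * ρ := by nlinarith
    calc ‖S φ - ((y₀ : X) + S c)‖
        = ‖((v : X) - (y₀ : X)) + ((S φ - P (S φ)) - (S c - P (S c)))‖ := by
          congr 1
          simp only [hvdef]
          abel
      _ ≤ ‖(v : X) - (y₀ : X)‖ + ‖(S φ - P (S φ)) - (S c - P (S c))‖ := norm_add_le _ _
      _ ≤ ε + b * ρ := add_le_add hvy hq
      _ = (α * a + 2 * b) / 2 * ρ := by rw [hεdef]; ring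

/-- Hausdorff dimension bound for a compact invariant set of a map with a
finite-rank-projection squeezing property in a Banach space. -/
theorem hausdorff_dim_invariant_set
    {X : Type*} [NormedAddCommGroup X] [NormedSpace ℝ X] [CompleteSpace X]
    [MeasurableSpace X] [BorelSpace X]
    (S : X → X) (A : Set X) (hA : IsCompact A) (hinv : S '' A = A)
    (P : X →ₗ[ℝ] X) (hproj : ∀ x, P (P x) = P x)
    (Λ : ℕ) (hΛ : 1 ≤ Λ) (hrank : Module.finrank ℝ (LinearMap.range P) = Λ)
    (a b : ℝ) (ha : 0 < a) (hb : 0 < b)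
    (hP : ∀ φ ∈ A, ∀ ψ ∈ A, ‖P (S φ) - P (S ψ)‖ ≤ a * ‖φ - ψ‖)
    (hQ : ∀ φ ∈ A, ∀ ψ ∈ A, ‖(S φ - P (S φ)) - (S ψ - P (S ψ))‖ ≤ b * ‖φ - ψ‖)
    (α : ℝ) (hα0 : 0 < α) (hα2 : α < 2) (hη : α * a + 2 * b < 1) :
    (∀ d : ℝ, (-Real.log Λ - Λ * Real.log (2 + 4 / α)) / Real.log (α * a + 2 * b) < d →
      μH[d] A = 0) ∧
    dimH A ≤ ENNReal.ofReal
      ((-Real.log Λ - Λ * Real.log (2 + 4 / α)) / Real.log (α * a + 2 * b)) := by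
  classical
  have hη0 : (0 : ℝ) < α * a + 2 * b := by positivity
  have hlogη : Real.log (α * a + 2 * b) < 0 := Real.log_neg hη0 hη
  have hc1 : (1 : ℝ) < 2 + 4 / α := by
    have : 0 < 4 / α := by positivity
    linarith
  have hlogc : 0 < Real.log (2 + 4 / α) := Real.log_pos hc1
  have hlogΛ : 0 ≤ Real.log (Λ : ℝ) := Real.log_nonneg (by exact_mod_cast hΛ)
  have hnum : -Real.log (Λ : ℝ) - (Λ : ℝ) * Real.log (2 + 4 / α) < 0 := by
    have hΛpos : (0 : ℝ) < (Λ : ℝ) := by exact_mod_cast Nat.lt_of_lt_of_le Nat.zero_lt_one hΛ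
    nlinarith
  have hD0 : 0 < (-Real.log (Λ : ℝ) - (Λ : ℝ) * Real.log (2 + 4 / α)) /
      Real.log (α * a + 2 * b) := div_pos_of_neg_of_neg hnum hlogη
  have part1 : ∀ d : ℝ, (-Real.log Λ - Λ * Real.log (2 + 4 / α)) /
      Real.log (α * a + 2 * b) < d → μH[d] A = 0 := by
    intro d hd
    have hd0 : 0 < d := hD0.trans hd
    -- the key geometric ratio
    have hNηd : (2 + 4 / α) ^ Λ * (α * a + 2 * b) ^ d < 1 := by
      have h1 : d * Real.log (α * a + 2 * b) <
          -Real.log (Λ : ℝ) - (Λ : ℝ) * Real.log (2 + 4 / α) :=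
        (div_lt_iff_of_neg hlogη).1 hd
      have hpos : (0 : ℝ) < (2 + 4 / α) ^ Λ * (α * a + 2 * b) ^ d := by positivity
      rw [← Real.log_neg_iff hpos, Real.log_mul (by positivity) (by positivity),
        Real.log_pow, Real.log_rpow hη0]
      linarith
    rcases A.eq_empty_or_nonempty with rfl | ⟨φc, hφc⟩
    · simp
    obtain ⟨r', hr'⟩ := hA.isBounded.subset_closedBall φc
    set r₀ : ℝ := max r' 1 with hr₀def
    have hr₀ : (0 : ℝ) < r₀ := lt_of_lt_of_le one_pos (le_max_right _ _)
    have hAball : A ⊆ closedBall φc r₀ :=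
      hr'.trans (closedBall_subset_closedBall (le_max_left _ _))
    -- iterated covers
    have cover : ∀ n : ℕ, ∃ t : Finset X, (↑t : Set X) ⊆ A ∧
        ((t.card : ℝ) ≤ ((2 + 4 / α) ^ Λ) ^ n) ∧
        A ⊆ ⋃ y ∈ t, closedBall y ((α * a + 2 * b) ^ n * r₀) := by
      intro n
      induction n with
      | zero =>
        refine ⟨{φc}, by simpa using hφc, by simp, by simpa using hAball⟩
      | succ n ih =>
        obtain ⟨t, htA, htcard, htcov⟩ := ih
        set ρ : ℝ := (α * a + 2 * b) ^ n * r₀ with hρdef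
        have hρ : 0 < ρ := by positivity
        have H : ∀ y ∈ t, ∃ s : Finset X, ((s.card : ℝ) ≤ (2 + 4 / α) ^ Λ) ∧
            S '' (closedBall y ρ ∩ A) ⊆ ⋃ z ∈ s,
              closedBall z ((α * a + 2 * b) / 2 * ρ) := fun y hy =>
          step_lemma S A P Λ hΛ hrank a b ha hb hP hQ α hα0 hα2 y (htA hy) ρ hρ
        choose! s hscard hscov using H
        set g : X → X := fun z =>
          if h : (closedBall z ((α * a + 2 * b) / 2 * ρ) ∩ A).Nonempty then h.choose else φc
          with hgdef
        have hgA : ∀ z, (closedBall z ((α * a + 2 * b) / 2 * ρ) ∩ A).Nonempty →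
            g z ∈ closedBall z ((α * a + 2 * b) / 2 * ρ) ∩ A := by
          intro z hz
          simp only [hgdef, dif_pos hz]
          exact hz.choose_spec
        refine ⟨t.biUnion (fun y => ((s y).filter
            (fun z => (closedBall z ((α * a + 2 * b) / 2 * ρ) ∩ A).Nonempty)).image g),
          ?_, ?_, ?_⟩
        · intro x hx
          simp only [Finset.coe_biUnion, Finset.coe_image, Finset.coe_filter,
            mem_iUnion, mem_image, mem_setOf_eq] at hx
          obtain ⟨y, -, z, ⟨-, hzne⟩, rfl⟩ := hx
          exact (hgA z hzne).2
        · calc ((t.biUnion (fun y => ((s y).filter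
              (fun z => (closedBall z ((α * a + 2 * b) / 2 * ρ) ∩ A).Nonempty)).image g)).card : ℝ)
              ≤ ((∑ y ∈ t, (((s y).filter
                (fun z => (closedBall z ((α * a + 2 * b) / 2 * ρ) ∩ A).Nonempty)).image g).card : ℕ) : ℝ) := by
                exact_mod_cast Finset.card_biUnion_le
            _ ≤ ∑ y ∈ t, ((2 + 4 / α) ^ Λ) := by
                rw [Nat.cast_sum]
                refine Finset.sum_le_sum fun y hy => ?_
                calc (((((s y).filter (fun z => (closedBall z ((α * a + 2 * b) / 2 * ρ) ∩ A).Nonempty))).image g).card : ℝ)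
                    ≤ (((s y).filter (fun z => (closedBall z ((α * a + 2 * b) / 2 * ρ) ∩ A).Nonempty)).card : ℝ) := by
                      exact_mod_cast Finset.card_image_le
                  _ ≤ ((s y).card : ℝ) := by exact_mod_cast Finset.card_filter_le _ _
                  _ ≤ (2 + 4 / α) ^ Λ := hscard y hy
            _ = (t.card : ℝ) * ((2 + 4 / α) ^ Λ) := by rw [Finset.sum_const, nsmul_eq_mul]
            _ ≤ ((2 + 4 / α) ^ Λ) ^ n * ((2 + 4 / α) ^ Λ) := by
                have : (0:ℝ) ≤ (2 + 4 / α) ^ Λ := by positivity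
                nlinarith [htcard]
            _ = ((2 + 4 / α) ^ Λ) ^ (n + 1) := by ring
        · intro x hx
          have hx' : x ∈ S '' A := by rw [hinv]; exact hx
          obtain ⟨φ, hφ, rfl⟩ := hx'
          obtain ⟨y, hyt, hφball⟩ := mem_iUnion₂.1 (htcov hφ)
          obtain ⟨z, hz, hSφz⟩ := mem_iUnion₂.1 (hscov y hyt ⟨φ, ⟨hφball, hφ⟩, rfl⟩)
          have hne : (closedBall z ((α * a + 2 * b) / 2 * ρ) ∩ A).Nonempty := ⟨S φ, hSφz, hx⟩
          refine mem_iUnion₂.2 ⟨g z, ?_, ?_⟩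
          · exact Finset.mem_biUnion.2 ⟨y, hyt, Finset.mem_image_of_mem g
              (Finset.mem_filter.2 ⟨hz, hne⟩)⟩
          · have h1 : dist (S φ) z ≤ (α * a + 2 * b) / 2 * ρ := mem_closedBall.1 hSφz
            have h2 : dist z (g z) ≤ (α * a + 2 * b) / 2 * ρ := by
              have := (hgA z hne).1
              rw [mem_closedBall, dist_comm] at this
              exact this
            rw [mem_closedBall]
            calc dist (S φ) (g z) ≤ dist (S φ) z + dist z (g z) := dist_triangle _ _ _
              _ ≤ (α * a + 2 * b) / 2 * ρ + (α * a + 2 * b) / 2 * ρ := add_le_add h1 h2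
              _ = (α * a + 2 * b) ^ (n + 1) * r₀ := by rw [hρdef]; ring
    choose T hTA hTcard hTcov using cover
    -- now estimate the Hausdorff measure
    refine le_antisymm ?_ zero_le
    have hball : ∀ n : ℕ, ∀ i : {x // x ∈ T n},
        EMetric.diam (closedBall (i : X) ((α * a + 2 * b) ^ n * r₀)) ≤
          ENNReal.ofReal (2 * ((α * a + 2 * b) ^ n * r₀)) := by
      intro n i
      have hρ : (0:ℝ) ≤ (α * a + 2 * b) ^ n * r₀ := by positivity
      rw [← Metric.emetric_closedBall (x := (i : X)) hρ]
      calc EMetric.diam _ ≤ 2 * ENNReal.ofReal ((α * a + 2 * b) ^ n * r₀) :=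
            EMetric.diam_closedBall
        _ = ENNReal.ofReal (2 * ((α * a + 2 * b) ^ n * r₀)) := by
            rw [ENNReal.ofReal_mul (p := 2) (by norm_num), ENNReal.ofReal_ofNat]
    have hle := Measure.hausdorffMeasure_le_liminf_tsum (X := X) d A
      (l := atTop) (fun n => ENNReal.ofReal (2 * ((α * a + 2 * b) ^ n * r₀)))
      (by
        have h1 : Tendsto (fun n : ℕ => 2 * ((α * a + 2 * b) ^ n * r₀)) atTop (𝓝 0) := by
          have := tendsto_pow_atTop_nhds_zero_of_lt_one hη0.le hη
          have h2 := (this.const_mul r₀).const_mul 2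
          simp only [mul_zero] at h2
          convert h2 using 2 with n
          ring
        have := ENNReal.tendsto_ofReal h1
        simpa using this)
      (fun n (i : {x // x ∈ T n}) => closedBall (i : X) ((α * a + 2 * b) ^ n * r₀))
      (Eventually.of_forall fun n => hball n)
      (Eventually.of_forall fun n x hx => by
        obtain ⟨y, hy, hmem⟩ := mem_iUnion₂.1 (hTcov n hx)
        exact mem_iUnion.2 ⟨⟨y, hy⟩, hmem⟩)
    refine le_trans hle ?_
    have hsum : ∀ n : ℕ, (∑' i : {x // x ∈ T n},
        EMetric.diam (closedBall (i : X) ((α * a + 2 * b) ^ n * r₀)) ^ d) ≤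
        ENNReal.ofReal (((2 + 4 / α) ^ Λ) ^ n * (2 * ((α * a + 2 * b) ^ n * r₀)) ^ d) := by
      intro n
      have hρpos : (0:ℝ) < 2 * ((α * a + 2 * b) ^ n * r₀) := by positivity
      calc (∑' i : {x // x ∈ T n},
            EMetric.diam (closedBall (i : X) ((α * a + 2 * b) ^ n * r₀)) ^ d)
          = ∑ i : {x // x ∈ T n},
            EMetric.diam (closedBall (i : X) ((α * a + 2 * b) ^ n * r₀)) ^ d := tsum_fintype _
        _ ≤ ∑ _i : {x // x ∈ T n},
            ENNReal.ofReal ((2 * ((α * a + 2 * b) ^ n * r₀)) ^ d) := by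
            refine Finset.sum_le_sum fun i _ => ?_
            rw [← ENNReal.ofReal_rpow_of_pos hρpos]
            exact ENNReal.rpow_le_rpow (hball n i) hd0.le
        _ = ((T n).card : ℝ≥0∞) * ENNReal.ofReal ((2 * ((α * a + 2 * b) ^ n * r₀)) ^ d) := by
            rw [Finset.sum_const, nsmul_eq_mul]
            congr 1
            simp [Fintype.card_coe]
        _ ≤ ENNReal.ofReal (((2 + 4 / α) ^ Λ) ^ n) *
            ENNReal.ofReal ((2 * ((α * a + 2 * b) ^ n * r₀)) ^ d) := by
            gcongr
            rw [← ENNReal.ofReal_natCast]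
            exact ENNReal.ofReal_le_ofReal (hTcard n)
        _ = ENNReal.ofReal (((2 + 4 / α) ^ Λ) ^ n * (2 * ((α * a + 2 * b) ^ n * r₀)) ^ d) := by
            rw [← ENNReal.ofReal_mul (by positivity)]
    have hu : Tendsto (fun n : ℕ =>
        ENNReal.ofReal (((2 + 4 / α) ^ Λ) ^ n * (2 * ((α * a + 2 * b) ^ n * r₀)) ^ d))
        atTop (𝓝 0) := by
      have key : ∀ n : ℕ, ((2 + 4 / α) ^ Λ) ^ n * (2 * ((α * a + 2 * b) ^ n * r₀)) ^ d
          = (2 * r₀) ^ d * ((2 + 4 / α) ^ Λ * (α * a + 2 * b) ^ d) ^ n := by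
        intro n
        have hηn : (0:ℝ) ≤ (α * a + 2 * b) ^ n := by positivity
        rw [show (2 : ℝ) * ((α * a + 2 * b) ^ n * r₀) = (α * a + 2 * b) ^ n * (2 * r₀) by ring,
          Real.mul_rpow hηn (by positivity), ← Real.rpow_natCast (α * a + 2 * b) n,
          ← Real.rpow_mul hη0.le, mul_comm (n : ℝ) d, Real.rpow_mul hη0.le,
          Real.rpow_natCast _ n, mul_pow]
        ring
      simp only [key]
      have hgeo : Tendsto (fun n : ℕ =>
          (2 * r₀) ^ d * ((2 + 4 / α) ^ Λ * (α * a + 2 * b) ^ d) ^ n) atTop (𝓝 0) := by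
        have h0 : (0:ℝ) ≤ (2 + 4 / α) ^ Λ * (α * a + 2 * b) ^ d := by positivity
        have := tendsto_pow_atTop_nhds_zero_of_lt_one h0 hNηd
        simpa using this.const_mul ((2 * r₀) ^ d)
      have := ENNReal.tendsto_ofReal hgeo
      simpa using this
    calc liminf (fun n : ℕ => ∑' i : {x // x ∈ T n},
          EMetric.diam (closedBall (i : X) ((α * a + 2 * b) ^ n * r₀)) ^ d) atTop
        ≤ liminf (fun n : ℕ =>
          ENNReal.ofReal (((2 + 4 / α) ^ Λ) ^ n * (2 * ((α * a + 2 * b) ^ n * r₀)) ^ d)) atTop :=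
          liminf_le_liminf (Eventually.of_forall hsum)
      _ = 0 := hu.liminf_eq
  refine ⟨part1, ?_⟩
  refine dimH_le fun d' hd' => ?_
  by_contra hcon
  push_neg at hcon
  have hd'0 : (0:ℝ) < (d' : ℝ) := by
    by_contra h0
    push_neg at h0
    have : (d' : ℝ≥0) = 0 := by exact_mod_cast le_antisymm (by exact_mod_cast h0) zero_le
    rw [this] at hcon
    simpa using hcon
  have hDd : (-Real.log Λ - Λ * Real.log (2 + 4 / α)) / Real.log (α * a + 2 * b) < (d' : ℝ) := by
    rw [show ((d' : ℝ≥0) : ℝ≥0∞) = ENNReal.ofReal (d' : ℝ) by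
      rw [ENNReal.ofReal_coe_nnreal]] at hcon
    exact (ENNReal.ofReal_lt_ofReal_iff hd'0).1 hcon
  have := part1 (d' : ℝ) hDd
  rw [this] at hd'
  exact ENNReal.zero_ne_top hd'
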